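/- Closedness under composition (first part of Lemma 7.2): Let {π⁽ⁿ⁾}_{n ∈ ℕ²} and {π'⁽ⁿ⁾}_{n ∈ ℕ²} be families in ℝ[[z_k,z_n]] satisfying the population condition, with associated re-expansion maps Γ* and Γ'*. Then the family π̃⁽ⁿ⁾ := π⁽ⁿ⁾ + Γ*(π'⁽ⁿ⁾) again satisfies the population condition π̃⁽ⁿ⁾_β = 0 unless |n| < |β|, and its associated re-expansion map Γ̃* equals the composition Γ* ∘ Γ'*. -/

import Mathlib

open MvPowerSeries

noncomputable section

/-- Indices `n ∈ ℕ² \ {(0,0)}` for the variables `z_n`. -/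
abbrev Pos2 : Type := {p : ℕ × ℕ // p ≠ (0, 0)}

/-- The variables: `z_k` for `k ∈ ℕ` (left) and `z_n` for `n ∈ ℕ²\{0}` (right). -/
abbrev Var : Type := ℕ ⊕ Pos2

/-- Multi-indices: finitely supported functions from the variables to ℕ. -/
abbrev MIdx : Type := Var →₀ ℕ

/-- The algebra ℝ[[z_k, z_n]] of formal power series. -/
abbrev FPS : Type := MvPowerSeries Var ℝ

/-- The variable `z_k` as a power series. -/
def zk (k : ℕ) : FPS := MvPowerSeries.X (Sum.inl k)

/-- The variable `z_n` as a power series. -/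
def zn (n : Pos2) : FPS := MvPowerSeries.X (Sum.inr n)

/-- The derivation `D⁽⁰⁾ = Σ_k (k+1) z_{k+1} ∂_{z_k}`, defined componentwise by
`(D⁽⁰⁾π)_β = Σ_{k, β(k+1) ≥ 1} (k+1)(β(k)+1) π_{β + e_k - e_{k+1}}`. -/
def Dzero (π : FPS) : FPS := fun β =>
  ∑ j ∈ β.support,
    (match j with
     | Sum.inl (k + 1) =>
         ((k : ℝ) + 1) * ((β (Sum.inl k) : ℝ) + 1) *
           MvPowerSeries.coeff (R := ℝ)
             (β + Finsupp.single (Sum.inl k) 1 - Finsupp.single (Sum.inl (k + 1)) 1) π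
     | _ => 0)

/-- `c ∈ ℝ[[z_k]]`: the subalgebra of series with no `z_n`-dependence. -/
def OnlyZk (c : FPS) : Prop :=
  ∀ β : MIdx, (∃ n : Pos2, β (Sum.inr n) ≠ 0) → MvPowerSeries.coeff (R := ℝ) β c = 0

/-- `[β] := Σ_k k β(k) − Σ_n β(n)`. -/
def bracketZ (β : MIdx) : ℤ :=
  β.sum fun j m => (match j with | Sum.inl k => (k : ℤ) | Sum.inr _ => -1) * (m : ℤ)

/-- `|β|_p := Σ_n |n| β(n)` where `|n| = n₁ + 2 n₂`. -/
def homP (β : MIdx) : ℝ :=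
  β.sum fun j m =>
    (match j with | Sum.inl _ => (0 : ℝ) | Sum.inr n => (n.val.1 : ℝ) + 2 * n.val.2) * (m : ℝ)

/-- The homogeneity `|β| := α (1 + [β]) + |β|_p`. -/
def hom (α : ℝ) (β : MIdx) : ℝ := α * (1 + (bracketZ β : ℝ)) + homP β

/-- `|β|_≺ := |β| + λ β(0)`; the ordering is `γ ≺ β iff |γ|_≺ < |β|_≺`. -/
def ordP (α lam : ℝ) (β : MIdx) : ℝ := hom α β + lam * (β (Sum.inl 0) : ℝ)

/-- Row-finiteness of a matrix indexed by pairs of multi-indices. -/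
def RowFinite (Γ : MIdx → MIdx → ℝ) : Prop := ∀ β : MIdx, {γ : MIdx | Γ β γ ≠ 0}.Finite

/-- The linear map induced componentwise by a (row-finite) matrix. -/
def applyG (Γ : MIdx → MIdx → ℝ) (π : FPS) : FPS := fun β =>
  ∑ᶠ γ : MIdx, Γ β γ * MvPowerSeries.coeff (R := ℝ) γ π

/-- The prescribed image of `z_k`: `Σ_{l≥0} (k+l choose k) q^l z_{k+l}`, defined
componentwise (only finitely many `l` contribute to each component). -/
def gammaZk (q : FPS) (k : ℕ) : FPS := fun β =>
  ∑ᶠ l : ℕ, (((k + l).choose k : ℝ)) * MvPowerSeries.coeff (R := ℝ) β (q ^ l * zk (k + l))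

/-- The population condition `π⁽ⁿ⁾_β = 0 unless |n| < |β|`. -/
def PopCond (α : ℝ) (pin : ℕ × ℕ → FPS) : Prop :=
  ∀ (n : ℕ × ℕ) (β : MIdx),
    MvPowerSeries.coeff (R := ℝ) β (pin n) ≠ 0 → ((n.1 : ℝ) + 2 * n.2) < hom α β

/-- `Γ` is the re-expansion matrix associated to the family `{π⁽ⁿ⁾}_{n ∈ ℕ²}`:
row-finite, the induced map is a unital algebra endomorphism, and it maps the
coordinates `z_k`, `z_n` as prescribed. -/
def IsReExpansion (pin : ℕ × ℕ → FPS) (Γ : MIdx → MIdx → ℝ) : Prop :=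
  RowFinite Γ ∧
  (∀ π π' : FPS, applyG Γ (π * π') = applyG Γ π * applyG Γ π') ∧
  applyG Γ 1 = 1 ∧
  (∀ k : ℕ, applyG Γ (zk k) = gammaZk (pin (0, 0)) k) ∧
  (∀ n : Pos2, applyG Γ (zn n) = zn n + pin n.val)


/-! ### Auxiliary machinery -/

section Aux

open Finset

lemma coeff_apply'' (π : FPS) (β : MIdx) : MvPowerSeries.coeff (R := ℝ) β π = π β := rfl

lemma applyG_coeff (Γ : MIdx → MIdx → ℝ) (π : FPS) (β : MIdx) :
    MvPowerSeries.coeff (R := ℝ) β (applyG Γ π) = ∑ᶠ γ, Γ β γ * MvPowerSeries.coeff (R := ℝ) γ π := rfl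

lemma applyG_coeff_sum {Γ : MIdx → MIdx → ℝ} (π : FPS) (β : MIdx)
    {s : Finset MIdx} (hs : ∀ γ, Γ β γ ≠ 0 → γ ∈ s) :
    MvPowerSeries.coeff (R := ℝ) β (applyG Γ π) = ∑ γ ∈ s, Γ β γ * MvPowerSeries.coeff (R := ℝ) γ π := by
  rw [applyG_coeff]
  exact finsum_eq_sum_of_support_subset _ fun γ hγ => hs γ (left_ne_zero_of_mul hγ)

lemma coeff_applyG_ne_zero {Γ : MIdx → MIdx → ℝ} {π : FPS} {β : MIdx}
    (h : MvPowerSeries.coeff (R := ℝ) β (applyG Γ π) ≠ 0) :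
    ∃ γ, Γ β γ ≠ 0 ∧ MvPowerSeries.coeff (R := ℝ) γ π ≠ 0 := by
  rw [applyG_coeff] at h
  obtain ⟨γ, hγ⟩ : ∃ γ, Γ β γ * MvPowerSeries.coeff (R := ℝ) γ π ≠ 0 := by
    by_contra hc; push_neg at hc
    exact h (finsum_eq_zero_of_forall_eq_zero hc)
  exact ⟨γ, left_ne_zero_of_mul hγ, right_ne_zero_of_mul hγ⟩

lemma applyG_add {Γ : MIdx → MIdx → ℝ} (hΓ : RowFinite Γ) (π π' : FPS) :
    applyG Γ (π + π') = applyG Γ π + applyG Γ π' := by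
  apply MvPowerSeries.ext; intro β
  have hs : ∀ γ, Γ β γ ≠ 0 → γ ∈ (hΓ β).toFinset := fun γ h => (hΓ β).mem_toFinset.2 h
  rw [map_add, applyG_coeff_sum _ _ hs, applyG_coeff_sum _ _ hs, applyG_coeff_sum _ _ hs,
    ← Finset.sum_add_distrib]
  refine Finset.sum_congr rfl fun γ _ => ?_
  rw [map_add, mul_add]

lemma applyG_smul {Γ : MIdx → MIdx → ℝ} (hΓ : RowFinite Γ) (c : ℝ) (π : FPS) :
    applyG Γ (c • π) = c • applyG Γ π := by
  apply MvPowerSeries.ext; intro β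
  have hs : ∀ γ, Γ β γ ≠ 0 → γ ∈ (hΓ β).toFinset := fun γ h => (hΓ β).mem_toFinset.2 h
  rw [MvPowerSeries.coeff_smul, applyG_coeff_sum _ _ hs, applyG_coeff_sum _ _ hs,
    Finset.mul_sum]
  refine Finset.sum_congr rfl fun γ _ => ?_
  rw [MvPowerSeries.coeff_smul]; ring

lemma applyG_pow {pin : ℕ × ℕ → FPS} {Γ : MIdx → MIdx → ℝ} (hΓ : IsReExpansion pin Γ)
    (π : FPS) (n : ℕ) : applyG Γ (π ^ n) = (applyG Γ π) ^ n := by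
  induction n with
  | zero => simpa using hΓ.2.2.1
  | succ n ih => rw [pow_succ, hΓ.2.1, ih, pow_succ]

lemma entry_eq (Γ : MIdx → MIdx → ℝ) (β γ : MIdx) :
    Γ β γ = MvPowerSeries.coeff (R := ℝ) β (applyG Γ (MvPowerSeries.monomial (R := ℝ) γ 1)) := by
  rw [applyG_coeff, finsum_eq_single _ γ ?_]
  · rw [MvPowerSeries.coeff_monomial_same, mul_one]
  · intro δ hδ
    rw [MvPowerSeries.coeff_monomial_ne hδ, mul_zero]

/-! ### Homogeneity -/

def hfun (α : ℝ) (β : MIdx) : ℝ := α * (bracketZ β : ℝ) + homP β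

lemma hom_eq (α : ℝ) (β : MIdx) : hom α β = α + hfun α β := by
  unfold hom hfun; ring

lemma bracketZ_add (β γ : MIdx) : bracketZ (β + γ) = bracketZ β + bracketZ γ := by
  unfold bracketZ
  refine Finsupp.sum_add_index' (fun j => by simp) (fun j m n => by push_cast; ring)

lemma homP_add (β γ : MIdx) : homP (β + γ) = homP β + homP γ := by
  unfold homP
  refine Finsupp.sum_add_index' (fun j => by simp) (fun j m n => by push_cast; ring)

lemma hfun_add (α : ℝ) (β γ : MIdx) : hfun α (β + γ) = hfun α β + hfun α γ := by
  unfold hfun; rw [bracketZ_add, homP_add]; push_cast; ring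

lemma hfun_zero (α : ℝ) : hfun α 0 = 0 := by
  unfold hfun bracketZ homP; rw [Finsupp.sum_zero_index, Finsupp.sum_zero_index]; simp

lemma hfun_single_inl (α : ℝ) (k m : ℕ) :
    hfun α (Finsupp.single (Sum.inl k : Var) m) = α * k * m := by
  unfold hfun bracketZ homP
  rw [Finsupp.sum_single_index (by simp), Finsupp.sum_single_index (by simp)]
  push_cast; ring

lemma hfun_single_inr (α : ℝ) (n : Pos2) (m : ℕ) :
    hfun α (Finsupp.single (Sum.inr n : Var) m) = (((n.val.1 : ℝ) + 2 * n.val.2) - α) * m := by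
  unfold hfun bracketZ homP
  rw [Finsupp.sum_single_index (by simp), Finsupp.sum_single_index (by simp)]
  push_cast; ring

lemma hfun_single_smul (α : ℝ) (j : Var) (m : ℕ) :
    hfun α (Finsupp.single j m) = m * hfun α (Finsupp.single j 1) := by
  cases j with
  | inl k => rw [hfun_single_inl, hfun_single_inl]; push_cast; ring
  | inr n => rw [hfun_single_inr, hfun_single_inr]; push_cast; ring

/-! ### Series supported in high homogeneity -/

def SuppGE (α a : ℝ) (π : FPS) : Prop :=
  ∀ β : MIdx, MvPowerSeries.coeff (R := ℝ) β π ≠ 0 → a ≤ hfun α β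

lemma SuppGE.mono {α a b : ℝ} {π : FPS} (h : SuppGE α a π) (hba : b ≤ a) : SuppGE α b π :=
  fun β hβ => hba.trans (h β hβ)

lemma suppGE_one (α : ℝ) : SuppGE α 0 1 := by
  intro β hβ
  have hβ0 : β = 0 := by
    by_contra h
    rw [MvPowerSeries.coeff_one, if_neg h] at hβ; exact hβ rfl
  rw [hβ0, hfun_zero]

lemma SuppGE.mul {α a b : ℝ} {π π' : FPS} (h : SuppGE α a π) (h' : SuppGE α b π') :
    SuppGE α (a + b) (π * π') := by
  intro β hβ
  rw [MvPowerSeries.coeff_mul] at hβ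
  obtain ⟨p, hp, hne⟩ := Finset.exists_ne_zero_of_sum_ne_zero hβ
  have h1 := h p.1 (left_ne_zero_of_mul hne)
  have h2 := h' p.2 (right_ne_zero_of_mul hne)
  have hβ' : β = p.1 + p.2 := (Finset.HasAntidiagonal.mem_antidiagonal.1 hp).symm
  rw [hβ', hfun_add]
  exact add_le_add h1 h2

lemma SuppGE.pow {α a : ℝ} {π : FPS} (h : SuppGE α a π) (n : ℕ) :
    SuppGE α (n * a) (π ^ n) := by
  induction n with
  | zero => simpa using suppGE_one α
  | succ n ih =>
      have := ih.mul h
      rw [pow_succ]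
      refine this.mono (le_of_eq ?_)
      push_cast; ring

lemma suppGE_X (α : ℝ) (j : Var) :
    SuppGE α (hfun α (Finsupp.single j 1)) (MvPowerSeries.X j : FPS) := by
  intro β hβ
  have hβ' : β = Finsupp.single j 1 := by
    by_contra h
    rw [MvPowerSeries.coeff_X, if_neg h] at hβ; exact hβ rfl
  rw [hβ']

lemma suppGE_pin {α : ℝ} {pin : ℕ × ℕ → FPS} (hpop : PopCond α pin) (n : ℕ × ℕ) :
    SuppGE α (((n.1 : ℝ) + 2 * n.2) - α) (pin n) := by
  intro β hβ
  have := hpop n β hβ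
  rw [hom_eq] at this; linarith

lemma gammaZk_coeff (q : FPS) (k : ℕ) (β : MIdx) :
    MvPowerSeries.coeff (R := ℝ) β (gammaZk q k) =
      ∑ᶠ l : ℕ, (((k + l).choose k : ℝ)) * MvPowerSeries.coeff (R := ℝ) β (q ^ l * zk (k + l)) := rfl

lemma suppGE_gammaZk {α : ℝ} {q : FPS} (hq : SuppGE α (-α) q) (k : ℕ) :
    SuppGE α (α * k) (gammaZk q k) := by
  intro β hβ
  rw [gammaZk_coeff] at hβ
  obtain ⟨l, hl⟩ : ∃ l, (((k + l).choose k : ℝ)) *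
      MvPowerSeries.coeff (R := ℝ) β (q ^ l * zk (k + l)) ≠ 0 := by
    by_contra hc; push_neg at hc
    exact hβ (finsum_eq_zero_of_forall_eq_zero hc)
  have h2 := ((hq.pow l).mul (suppGE_X α (Sum.inl (k + l)))) β (right_ne_zero_of_mul hl)
  rw [hfun_single_inl] at h2
  push_cast at h2 ⊢
  linarith

lemma suppGE_applyG_X {α : ℝ} {pin : ℕ × ℕ → FPS} {Γ : MIdx → MIdx → ℝ}
    (hΓ : IsReExpansion pin Γ) (hpop : PopCond α pin) (j : Var) :
    SuppGE α (hfun α (Finsupp.single j 1)) (applyG Γ (MvPowerSeries.X j)) := by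
  cases j with
  | inl k =>
      have hq : SuppGE α (-α) (pin (0, 0)) := by
        have := suppGE_pin hpop (0, 0)
        simpa using this
      have him : applyG Γ (MvPowerSeries.X (Sum.inl k)) = gammaZk (pin (0, 0)) k := hΓ.2.2.2.1 k
      rw [him, hfun_single_inl]
      exact (suppGE_gammaZk hq k).mono (le_of_eq (by ring))
  | inr n =>
      have him : applyG Γ (MvPowerSeries.X (Sum.inr n)) = zn n + pin n.val := hΓ.2.2.2.2 n
      rw [him, hfun_single_inr]
      intro β hβ
      rw [map_add] at hβ
      have : MvPowerSeries.coeff (R := ℝ) β (zn n) ≠ 0 ∨ MvPowerSeries.coeff (R := ℝ) β (pin n.val) ≠ 0 := by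
        by_contra hc; push_neg at hc
        rw [hc.1, hc.2] at hβ; exact hβ (by ring)
      rcases this with h | h
      · have := suppGE_X α (Sum.inr n) β h
        rw [hfun_single_inr] at this
        push_cast at this ⊢
        linarith
      · have := suppGE_pin hpop n.val β h
        push_cast at this ⊢
        linarith

lemma suppGE_applyG_monomial {α : ℝ} {pin : ℕ × ℕ → FPS} {Γ : MIdx → MIdx → ℝ}
    (hΓ : IsReExpansion pin Γ) (hpop : PopCond α pin) (γ : MIdx) :
    SuppGE α (hfun α γ) (applyG Γ (MvPowerSeries.monomial (R := ℝ) γ 1)) := by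
  induction γ using Finsupp.induction with
  | zero =>
      rw [MvPowerSeries.monomial_zero_one, hΓ.2.2.1, hfun_zero]
      exact suppGE_one α
  | single_add j m γ hjγ hm ih =>
      have hsplit : (MvPowerSeries.monomial (R := ℝ) (Finsupp.single j m + γ) 1 : FPS) =
          (MvPowerSeries.X j : FPS) ^ m * MvPowerSeries.monomial (R := ℝ) γ 1 := by
        rw [MvPowerSeries.X_pow_eq, MvPowerSeries.monomial_mul_monomial, one_mul]
      rw [hsplit, hΓ.2.1, applyG_pow hΓ, hfun_add, hfun_single_smul]
      exact ((suppGE_applyG_X hΓ hpop j).pow m).mul ih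

lemma entry_le {α : ℝ} {pin : ℕ × ℕ → FPS} {Γ : MIdx → MIdx → ℝ}
    (hΓ : IsReExpansion pin Γ) (hpop : PopCond α pin) {β γ : MIdx} (h : Γ β γ ≠ 0) :
    hfun α γ ≤ hfun α β := by
  rw [entry_eq Γ β γ] at h
  exact suppGE_applyG_monomial hΓ hpop γ β h

end Aux

section Aux2

open Finset

/-! ### Matrix composition -/

def matMul (Γ Γ' : MIdx → MIdx → ℝ) : MIdx → MIdx → ℝ := fun β γ => ∑ᶠ δ, Γ β δ * Γ' δ γ

lemma matMul_apply {Γ Γ' : MIdx → MIdx → ℝ} (h1 : RowFinite Γ) (β γ : MIdx) :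
    matMul Γ Γ' β γ = ∑ δ ∈ (h1 β).toFinset, Γ β δ * Γ' δ γ :=
  finsum_eq_sum_of_support_subset _ fun δ hδ =>
    (h1 β).mem_toFinset.2 (left_ne_zero_of_mul hδ)

lemma matMul_ne_zero {Γ Γ' : MIdx → MIdx → ℝ} (h1 : RowFinite Γ) {β γ : MIdx}
    (h : matMul Γ Γ' β γ ≠ 0) : ∃ δ, Γ β δ ≠ 0 ∧ Γ' δ γ ≠ 0 := by
  rw [matMul_apply h1] at h
  obtain ⟨δ, _, hδ⟩ := Finset.exists_ne_zero_of_sum_ne_zero h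
  exact ⟨δ, left_ne_zero_of_mul hδ, right_ne_zero_of_mul hδ⟩

lemma rowFinite_matMul {Γ Γ' : MIdx → MIdx → ℝ} (h1 : RowFinite Γ) (h2 : RowFinite Γ') :
    RowFinite (matMul Γ Γ') := by
  intro β
  refine Set.Finite.subset ((h1 β).biUnion (fun δ _ => h2 δ)) ?_
  intro γ hγ
  obtain ⟨δ, hδ1, hδ2⟩ := matMul_ne_zero h1 hγ
  exact Set.mem_biUnion hδ1 hδ2

lemma applyG_matMul {Γ Γ' : MIdx → MIdx → ℝ} (h1 : RowFinite Γ) (h2 : RowFinite Γ')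
    (π : FPS) : applyG (matMul Γ Γ') π = applyG Γ (applyG Γ' π) := by
  apply MvPowerSeries.ext; intro β
  classical
  set S := (h1 β).toFinset with hS
  set U := S.biUnion (fun δ => (h2 δ).toFinset) with hU
  have hUmem : ∀ γ, matMul Γ Γ' β γ ≠ 0 → γ ∈ U := by
    intro γ hγ
    obtain ⟨δ, hδ1, hδ2⟩ := matMul_ne_zero h1 hγ
    exact Finset.mem_biUnion.2 ⟨δ, (h1 β).mem_toFinset.2 hδ1, (h2 δ).mem_toFinset.2 hδ2⟩
  rw [applyG_coeff_sum π β hUmem,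
    applyG_coeff_sum (applyG Γ' π) β (fun δ h => (h1 β).mem_toFinset.2 h)]
  have hrow : ∀ δ ∈ S, MvPowerSeries.coeff (R := ℝ) δ (applyG Γ' π)
      = ∑ γ ∈ U, Γ' δ γ * MvPowerSeries.coeff (R := ℝ) γ π := by
    intro δ hδ
    exact applyG_coeff_sum π δ
      (fun γ h => Finset.mem_biUnion.2 ⟨δ, hδ, (h2 δ).mem_toFinset.2 h⟩)
  calc ∑ γ ∈ U, matMul Γ Γ' β γ * MvPowerSeries.coeff (R := ℝ) γ π
      = ∑ γ ∈ U, ∑ δ ∈ S, Γ β δ * Γ' δ γ * MvPowerSeries.coeff (R := ℝ) γ π := by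
        refine Finset.sum_congr rfl fun γ _ => ?_
        rw [matMul_apply h1, Finset.sum_mul]
    _ = ∑ δ ∈ S, ∑ γ ∈ U, Γ β δ * Γ' δ γ * MvPowerSeries.coeff (R := ℝ) γ π := Finset.sum_comm
    _ = ∑ δ ∈ S, Γ β δ * MvPowerSeries.coeff (R := ℝ) δ (applyG Γ' π) := by
        refine Finset.sum_congr rfl fun δ hδ => ?_
        rw [hrow δ hδ, Finset.mul_sum]
        refine Finset.sum_congr rfl fun γ _ => by ring

/-! ### Exchanging `applyG` and componentwise countable sums -/

lemma applyG_finsum {Γ : MIdx → MIdx → ℝ} (h1 : RowFinite Γ) (G : FPS) (F : ℕ → FPS)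
    (hG : ∀ γ : MIdx, MvPowerSeries.coeff (R := ℝ) γ G = ∑ᶠ l, MvPowerSeries.coeff (R := ℝ) γ (F l))
    (hF : ∀ γ : MIdx, {l : ℕ | MvPowerSeries.coeff (R := ℝ) γ (F l) ≠ 0}.Finite) (β : MIdx) :
    MvPowerSeries.coeff (R := ℝ) β (applyG Γ G) =
      ∑ᶠ l, MvPowerSeries.coeff (R := ℝ) β (applyG Γ (F l)) := by
  classical
  set S := (h1 β).toFinset with hSdef
  set L := S.biUnion (fun γ => (hF γ).toFinset) with hLdef
  have hsum : ∀ l, MvPowerSeries.coeff (R := ℝ) β (applyG Γ (F l))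
      = ∑ γ ∈ S, Γ β γ * MvPowerSeries.coeff (R := ℝ) γ (F l) :=
    fun l => applyG_coeff_sum (F l) β (fun γ h => (h1 β).mem_toFinset.2 h)
  have lhs : MvPowerSeries.coeff (R := ℝ) β (applyG Γ G)
      = ∑ γ ∈ S, Γ β γ * ∑ l ∈ L, MvPowerSeries.coeff (R := ℝ) γ (F l) := by
    rw [applyG_coeff_sum _ β (fun γ h => (h1 β).mem_toFinset.2 h)]
    refine Finset.sum_congr rfl fun γ hγ => ?_
    rw [hG γ]
    congr 1
    exact finsum_eq_sum_of_support_subset _ fun l hl =>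
      Finset.mem_biUnion.2 ⟨γ, hγ, (hF γ).mem_toFinset.2 hl⟩
  rw [lhs]
  have : ∑ γ ∈ S, Γ β γ * ∑ l ∈ L, MvPowerSeries.coeff (R := ℝ) γ (F l)
      = ∑ l ∈ L, MvPowerSeries.coeff (R := ℝ) β (applyG Γ (F l)) := by
    simp_rw [Finset.mul_sum]
    rw [Finset.sum_comm]
    exact Finset.sum_congr rfl fun l _ => (hsum l).symm
  rw [this]
  refine (finsum_eq_sum_of_support_subset _ ?_).symm
  intro l hl
  rw [Function.mem_support, hsum l] at hl
  obtain ⟨γ, hγS, hγ⟩ := Finset.exists_ne_zero_of_sum_ne_zero hl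
  exact Finset.mem_biUnion.2 ⟨γ, hγS, (hF γ).mem_toFinset.2 (right_ne_zero_of_mul hγ)⟩

lemma mul_series_finsum (π G : FPS) (F : ℕ → FPS)
    (hG : ∀ γ : MIdx, MvPowerSeries.coeff (R := ℝ) γ G = ∑ᶠ l, MvPowerSeries.coeff (R := ℝ) γ (F l))
    (hF : ∀ γ : MIdx, {l : ℕ | MvPowerSeries.coeff (R := ℝ) γ (F l) ≠ 0}.Finite) (β : MIdx) :
    MvPowerSeries.coeff (R := ℝ) β (π * G) = ∑ᶠ l, MvPowerSeries.coeff (R := ℝ) β (π * F l) := by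
  classical
  set L := (Finset.HasAntidiagonal.antidiagonal β).biUnion (fun p => (hF p.2).toFinset) with hLdef
  have hterm : ∀ p ∈ Finset.HasAntidiagonal.antidiagonal β,
      MvPowerSeries.coeff (R := ℝ) p.1 π * MvPowerSeries.coeff (R := ℝ) p.2 G
      = ∑ l ∈ L, MvPowerSeries.coeff (R := ℝ) p.1 π * MvPowerSeries.coeff (R := ℝ) p.2 (F l) := by
    intro p hp
    have : MvPowerSeries.coeff (R := ℝ) p.2 G = ∑ l ∈ L, MvPowerSeries.coeff (R := ℝ) p.2 (F l) := by
      rw [hG]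
      exact finsum_eq_sum_of_support_subset _ fun l hl =>
        Finset.mem_biUnion.2 ⟨p, hp, (hF p.2).mem_toFinset.2 hl⟩
    rw [this, Finset.mul_sum]
  rw [MvPowerSeries.coeff_mul, Finset.sum_congr rfl hterm, Finset.sum_comm]
  have hml : ∀ l, ∑ p ∈ Finset.HasAntidiagonal.antidiagonal β,
      MvPowerSeries.coeff (R := ℝ) p.1 π * MvPowerSeries.coeff (R := ℝ) p.2 (F l)
      = MvPowerSeries.coeff (R := ℝ) β (π * F l) := fun l => (MvPowerSeries.coeff_mul β π (F l)).symm
  rw [Finset.sum_congr rfl fun l _ => hml l]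
  refine (finsum_eq_sum_of_support_subset _ ?_).symm
  intro l hl
  rw [Function.mem_support, MvPowerSeries.coeff_mul] at hl
  obtain ⟨p, hp, hne⟩ := Finset.exists_ne_zero_of_sum_ne_zero hl
  exact Finset.mem_biUnion.2 ⟨p, hp, (hF p.2).mem_toFinset.2 (right_ne_zero_of_mul hne)⟩

/-! ### Coefficient support of the `q ^ l * z_{k+l}` family -/

lemma coeff_mul_zk_ne {π : FPS} {m : ℕ} {β : MIdx}
    (h : MvPowerSeries.coeff (R := ℝ) β (π * zk m) ≠ 0) : β (Sum.inl m) ≠ 0 := by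
  rw [MvPowerSeries.coeff_mul] at h
  obtain ⟨p, hp, hne⟩ := Finset.exists_ne_zero_of_sum_ne_zero h
  have h2 : MvPowerSeries.coeff (R := ℝ) p.2 (zk m) ≠ 0 := right_ne_zero_of_mul hne
  have hp2 : p.2 = Finsupp.single (Sum.inl m : Var) 1 := by
    by_contra hne2
    rw [zk, MvPowerSeries.coeff_X, if_neg hne2] at h2; exact h2 rfl
  have hβ : β = p.1 + p.2 := (Finset.HasAntidiagonal.mem_antidiagonal.1 hp).symm
  rw [hβ, hp2]
  simp [Finsupp.add_apply, Finsupp.single_apply]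

lemma zk_family_finite (q : FPS) (k : ℕ) (c : ℕ → ℝ) (γ : MIdx) :
    {l : ℕ | MvPowerSeries.coeff (R := ℝ) γ (c l • (q ^ l * zk (k + l))) ≠ 0}.Finite := by
  have hinj : Function.Injective (fun l : ℕ => (Sum.inl (k + l) : Var)) := by
    intro a b hab
    simpa using Sum.inl_injective hab
  refine Set.Finite.subset
    (Set.Finite.preimage hinj.injOn (γ.support.finite_toSet)) ?_
  intro l hl
  have h1 : MvPowerSeries.coeff (R := ℝ) γ (q ^ l * zk (k + l)) ≠ 0 := by
    intro h
    apply hl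
    rw [Set.mem_setOf_eq] at *
    rw [MvPowerSeries.coeff_smul, h, mul_zero]
  simp only [Set.mem_preimage, Finset.mem_coe, Finsupp.mem_support_iff]
  exact coeff_mul_zk_ne h1

/-! ### The binomial identity -/

lemma choose_id (k l m : ℕ) :
    ((k + l).choose k) * ((k + l + m).choose (k + l)) = ((k + l + m).choose k) * ((l + m).choose l) := by
  have h := Nat.choose_mul (n := k + l + m) (show k ≤ k + l by omega)
  rw [show k + l + m - k = l + m from by omega, show k + l - k = l from by omega] at h
  rw [mul_comm, h]

end Aux2

section Aux3

open Finset

lemma gammaZk_coeff_smul (q : FPS) (k : ℕ) (β : MIdx) :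
    MvPowerSeries.coeff (R := ℝ) β (gammaZk q k)
      = ∑ᶠ l, MvPowerSeries.coeff (R := ℝ) β ((((k + l).choose k : ℝ)) • (q ^ l * zk (k + l))) := by
  rw [gammaZk_coeff]
  exact finsum_congr fun l => by rw [MvPowerSeries.coeff_smul]

/-- The purely combinatorial reindexing of the double sum. -/
lemma triangle_sum (T : ℕ → ℕ → ℝ) (k N : ℕ) (hT : ∀ l m, N < k + l + m → T l m = 0) :
    (∑ᶠ l, ((k + l).choose k : ℝ) * ∑ᶠ m, ((k + l + m).choose (k + l) : ℝ) * T l m)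
    = ∑ᶠ j, ((k + j).choose k : ℝ) *
        ∑ m ∈ Finset.range (j + 1), (j.choose m : ℝ) * T (j - m) m := by
  classical
  set n := N + 1 with hn
  set A : ℕ → ℕ → ℝ :=
    fun l m => ((k + l).choose k : ℝ) * (((k + l + m).choose (k + l) : ℝ) * T l m) with hA
  have hAvan : ∀ l m, n ≤ l + m → A l m = 0 := by
    intro l m h
    rw [hA]; dsimp only
    rw [hT l m (by omega), mul_zero, mul_zero]
  -- Step 1 : the left-hand side as a finite double sum
  have hinner : ∀ l, (∑ᶠ m, ((k + l + m).choose (k + l) : ℝ) * T l m)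
      = ∑ m ∈ Finset.range n, ((k + l + m).choose (k + l) : ℝ) * T l m := by
    intro l
    refine finsum_eq_sum_of_support_subset _ ?_
    intro m hm
    rw [Function.mem_support] at hm
    rw [Finset.coe_range, Set.mem_Iio]
    by_contra hc; push_neg at hc
    exact hm (by rw [hT l m (by omega), mul_zero])
  have step1 : (∑ᶠ l, ((k + l).choose k : ℝ) * ∑ᶠ m, ((k + l + m).choose (k + l) : ℝ) * T l m)
      = ∑ l ∈ Finset.range n, ∑ m ∈ Finset.range n, A l m := by
    rw [finsum_eq_sum_of_support_subset _ (s := Finset.range n) ?_]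
    · refine Finset.sum_congr rfl fun l _ => ?_
      rw [hinner l, Finset.mul_sum]
    · intro l hl
      rw [Function.mem_support] at hl
      rw [Finset.coe_range, Set.mem_Iio]
      by_contra hc; push_neg at hc
      refine hl ?_
      rw [hinner l]
      rw [Finset.sum_eq_zero fun m _ => by rw [hT l m (by omega), mul_zero], mul_zero]
  -- Step 2 : the right-hand side as a finite double sum
  have step2 : (∑ᶠ j, ((k + j).choose k : ℝ) *
        ∑ m ∈ Finset.range (j + 1), (j.choose m : ℝ) * T (j - m) m)
      = ∑ j ∈ Finset.range n, ∑ m ∈ Finset.range (j + 1),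
          ((k + j).choose k : ℝ) * ((j.choose m : ℝ) * T (j - m) m) := by
    rw [finsum_eq_sum_of_support_subset _ (s := Finset.range n) ?_]
    · exact Finset.sum_congr rfl fun j _ => Finset.mul_sum _ _ _
    · intro j hj
      rw [Function.mem_support] at hj
      rw [Finset.coe_range, Set.mem_Iio]
      by_contra hc; push_neg at hc
      refine hj ?_
      rw [Finset.sum_eq_zero, mul_zero]
      intro m hm
      have hm' : m ≤ j := Nat.lt_succ_iff.1 (Finset.mem_range.1 hm)
      rw [hT (j - m) m (by omega), mul_zero]
  -- Step 3 : per-`j` identification with the antidiagonal sum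
  have step3 : ∀ j, (∑ m ∈ Finset.range (j + 1),
        ((k + j).choose k : ℝ) * ((j.choose m : ℝ) * T (j - m) m))
      = ∑ p ∈ Finset.HasAntidiagonal.antidiagonal j, A p.1 p.2 := by
    intro j
    rw [Finset.Nat.sum_antidiagonal_eq_sum_range_succ_mk]
    rw [← Finset.sum_range_reflect (fun i => A i (j - i)) (j + 1)]
    refine Finset.sum_congr rfl fun m hm => ?_
    have hm' : m ≤ j := Nat.lt_succ_iff.1 (Finset.mem_range.1 hm)
    have e1 : j + 1 - 1 - m = j - m := by omega
    have e2 : j - (j - m) = m := by omega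
    rw [e1, e2, hA]; dsimp only
    rw [show k + (j - m) + m = k + j from by omega]
    have h1 := choose_id k (j - m) m
    rw [show k + (j - m) + m = k + j from by omega,
      show (j - m) + m = j from by omega, Nat.choose_symm hm'] at h1
    have h1' : (((k + (j - m)).choose k : ℝ)) * (((k + j).choose (k + (j - m)) : ℝ))
        = (((k + j).choose k : ℝ)) * ((j.choose m : ℝ)) := by exact_mod_cast h1
    linear_combination (-(T (j - m) m)) * h1'
  -- Step 4+5 : antidiagonal union versus full square
  have hdisj : (↑(Finset.range n) : Set ℕ).PairwiseDisjoint Finset.HasAntidiagonal.antidiagonal := by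
    intro i _ j _ hij
    simp only [Function.onFun]
    rw [Finset.disjoint_left]
    intro p hpi hpj
    rw [Finset.HasAntidiagonal.mem_antidiagonal] at hpi hpj
    exact hij (by omega)
  have step4 : (∑ j ∈ Finset.range n, ∑ p ∈ Finset.HasAntidiagonal.antidiagonal j, A p.1 p.2)
      = ∑ p ∈ (Finset.range n).biUnion Finset.HasAntidiagonal.antidiagonal, A p.1 p.2 :=
    (Finset.sum_biUnion hdisj).symm
  have step5 : (∑ p ∈ (Finset.range n).biUnion Finset.HasAntidiagonal.antidiagonal, A p.1 p.2)
      = ∑ p ∈ Finset.range n ×ˢ Finset.range n, A p.1 p.2 := by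
    refine Finset.sum_subset ?_ ?_
    · intro p hp
      rw [Finset.mem_biUnion] at hp
      obtain ⟨j, hj, hpj⟩ := hp
      rw [Finset.HasAntidiagonal.mem_antidiagonal] at hpj
      rw [Finset.mem_range] at hj
      rw [Finset.mem_product, Finset.mem_range, Finset.mem_range]
      omega
    · intro p _ hp
      refine hAvan p.1 p.2 ?_
      by_contra hc; push_neg at hc
      exact hp (Finset.mem_biUnion.2 ⟨p.1 + p.2, Finset.mem_range.2 hc,
        Finset.HasAntidiagonal.mem_antidiagonal.2 rfl⟩)
  rw [step1, step2, ← Finset.sum_product']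
  rw [show (∑ j ∈ Finset.range n, ∑ m ∈ Finset.range (j + 1),
      ((k + j).choose k : ℝ) * ((j.choose m : ℝ) * T (j - m) m))
    = ∑ j ∈ Finset.range n, ∑ p ∈ Finset.HasAntidiagonal.antidiagonal j, A p.1 p.2
    from Finset.sum_congr rfl fun j _ => step3 j]
  rw [step4, step5]

/-- The key composition identity for the images of the `z_k`. -/
lemma applyG_gammaZk {pin : ℕ × ℕ → FPS} {Γ : MIdx → MIdx → ℝ}
    (hΓ : IsReExpansion pin Γ) (q' : FPS) (k : ℕ) :
    applyG Γ (gammaZk q' k) = gammaZk (pin (0, 0) + applyG Γ q') k := by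
  classical
  apply MvPowerSeries.ext; intro β
  set q := pin (0, 0) with hq
  set Q' := applyG Γ q' with hQ'
  set N : ℕ := β.support.sup
    (fun j => match j with | Sum.inl i => i | Sum.inr _ => 0) with hN
  have hTvan : ∀ l m, N < k + l + m →
      MvPowerSeries.coeff (R := ℝ) β (Q' ^ l * (q ^ m * zk (k + l + m))) = 0 := by
    intro l m hlt
    by_contra hne
    have h0 : MvPowerSeries.coeff (R := ℝ) β ((Q' ^ l * q ^ m) * zk (k + l + m)) ≠ 0 := by
      rw [mul_assoc]; exact hne
    have hmem : (Sum.inl (k + l + m) : Var) ∈ β.support :=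
      Finsupp.mem_support_iff.2 (coeff_mul_zk_ne h0)
    have hle : k + l + m ≤ N :=
      Finset.le_sup (f := fun j : Var => match j with | Sum.inl i => i | Sum.inr _ => 0) hmem
    omega
  have hLHS : MvPowerSeries.coeff (R := ℝ) β (applyG Γ (gammaZk q' k))
      = ∑ᶠ l, ((k + l).choose k : ℝ) * ∑ᶠ m, ((k + l + m).choose (k + l) : ℝ) *
          MvPowerSeries.coeff (R := ℝ) β (Q' ^ l * (q ^ m * zk (k + l + m))) := by
    rw [applyG_finsum hΓ.1 (gammaZk q' k)
      (fun l => (((k + l).choose k : ℝ)) • (q' ^ l * zk (k + l)))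
      (fun γ => gammaZk_coeff_smul q' k γ) (fun γ => zk_family_finite q' k _ γ) β]
    refine finsum_congr fun l => ?_
    rw [applyG_smul hΓ.1, MvPowerSeries.coeff_smul, hΓ.2.1, applyG_pow hΓ, hΓ.2.2.2.1 (k + l)]
    congr 1
    rw [mul_series_finsum (Q' ^ l) (gammaZk q (k + l))
      (fun m => (((k + l + m).choose (k + l) : ℝ)) • (q ^ m * zk (k + l + m)))
      (fun γ => gammaZk_coeff_smul q (k + l) γ)
      (fun γ => zk_family_finite q (k + l) _ γ) β]
    refine finsum_congr fun m => ?_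
    rw [mul_smul_comm, MvPowerSeries.coeff_smul]
  have hRHS : MvPowerSeries.coeff (R := ℝ) β (gammaZk (q + Q') k)
      = ∑ᶠ j, ((k + j).choose k : ℝ) * ∑ m ∈ Finset.range (j + 1), (j.choose m : ℝ) *
          MvPowerSeries.coeff (R := ℝ) β
            (Q' ^ (j - m) * (q ^ m * zk (k + (j - m) + m))) := by
    rw [gammaZk_coeff]
    refine finsum_congr fun j => ?_
    congr 1
    rw [add_pow, Finset.sum_mul, map_sum]
    refine Finset.sum_congr rfl fun m hm => ?_
    have hm' : m ≤ j := Nat.lt_succ_iff.1 (Finset.mem_range.1 hm)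
    have harr : q ^ m * Q' ^ (j - m) * ((j.choose m : ℕ) : FPS) * zk (k + j)
        = ((j.choose m : ℕ) : FPS) * (Q' ^ (j - m) * (q ^ m * zk (k + j))) := by ring
    rw [harr, show ((j.choose m : ℕ) : FPS)
        = MvPowerSeries.C (σ := Var) (R := ℝ) ((j.choose m : ℕ) : ℝ) from by rw [map_natCast],
      MvPowerSeries.coeff_C_mul,
      show k + (j - m) + m = k + j from by omega]
  rw [hLHS, hRHS]
  exact triangle_sum
    (fun l m => MvPowerSeries.coeff (R := ℝ) β (Q' ^ l * (q ^ m * zk (k + l + m)))) k N hTvan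

end Aux3


/-- Closedness under composition (first part of Lemma 7.2): the family
`π̃⁽ⁿ⁾ := π⁽ⁿ⁾ + Γ*(π'⁽ⁿ⁾)` again satisfies the population condition, and its
associated re-expansion map equals the composition `Γ* ∘ Γ'*`. -/
theorem stmt_14 (α : ℝ) (hα0 : 0 < α) (hα1 : α < 1)
    (pin pin' : ℕ × ℕ → FPS) (hpop : PopCond α pin) (hpop' : PopCond α pin')
    (Γ Γ' : MIdx → MIdx → ℝ) (hΓ : IsReExpansion pin Γ) (hΓ' : IsReExpansion pin' Γ') :
    PopCond α (fun n => pin n + applyG Γ (pin' n)) ∧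
    ∃ Γt : MIdx → MIdx → ℝ,
      IsReExpansion (fun n => pin n + applyG Γ (pin' n)) Γt ∧
      ∀ π : FPS, applyG Γt π = applyG Γ (applyG Γ' π) := by
  constructor
  · -- the population condition for the composed family
    intro n β hβ
    simp only [map_add] at hβ
    have : MvPowerSeries.coeff (R := ℝ) β (pin n) ≠ 0 ∨
        MvPowerSeries.coeff (R := ℝ) β (applyG Γ (pin' n)) ≠ 0 := by
      by_contra hc; push_neg at hc
      rw [hc.1, hc.2] at hβ; exact hβ (by ring)
    rcases this with h | h
    · exact hpop n β h
    · obtain ⟨γ, hγ1, hγ2⟩ := coeff_applyG_ne_zero h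
      have hlt := hpop' n γ hγ2
      have hle := entry_le hΓ hpop hγ1
      rw [hom_eq] at hlt ⊢
      linarith
  · -- the composed re-expansion map
    refine ⟨matMul Γ Γ', ⟨rowFinite_matMul hΓ.1 hΓ'.1, ?_, ?_, ?_, ?_⟩,
      fun π => applyG_matMul hΓ.1 hΓ'.1 π⟩
    · intro π π'
      rw [applyG_matMul hΓ.1 hΓ'.1, applyG_matMul hΓ.1 hΓ'.1, applyG_matMul hΓ.1 hΓ'.1,
        hΓ'.2.1, hΓ.2.1]
    · rw [applyG_matMul hΓ.1 hΓ'.1, hΓ'.2.2.1, hΓ.2.2.1]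
    · intro k
      rw [applyG_matMul hΓ.1 hΓ'.1, hΓ'.2.2.2.1 k, applyG_gammaZk hΓ (pin' (0, 0)) k]
    · intro n
      rw [applyG_matMul hΓ.1 hΓ'.1, hΓ'.2.2.2.2 n, applyG_add hΓ.1, hΓ.2.2.2.2 n, add_assoc]
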